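/- Let σ ∈ C(ℝ), σ ≠ 0. Then the linear span of the functions x ↦ σ(αx + β), over all α, β ∈ ℝ, is dense in C(ℝ) in the topology of uniform convergence on compact subsets if and only if σ is not a polynomial. -/

import Mathlib

open MeasureTheory Convolution Filter Topology Set Polynomial

section Helpers


lemma integral_mem_closedSubmodule {E : Type*} [NormedAddCommGroup E] [NormedSpace ℝ E]
    [CompleteSpace E] (p : Submodule ℝ E) (hp : IsClosed (p : Set E)) {F : ℝ → E}
    (hF : Continuous F) (hsupp : HasCompactSupport F) (hmem : ∀ s, F s ∈ p) :
    (∫ s, F s) ∈ p := by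
  haveI : CompleteSpace p := hp.completeSpace_coe
  set F' : ℝ → p := fun s => ⟨F s, hmem s⟩ with hF'
  have hF'c : Continuous F' := hF.subtype_mk _
  have hF'supp : HasCompactSupport F' := by
    apply hsupp.mono
    intro s hs
    simp only [Function.mem_support] at hs ⊢
    intro h; exact hs (by simp [hF', h, Submodule.mk_eq_zero])
  have hInt : Integrable F' := hF'c.integrable_of_hasCompactSupport hF'supp
  have key : (∫ s, F s) = ((∫ s, F' s : p) : E) := by
    rw [show (∫ s, F s) = ∫ s, p.subtypeL (F' s) from rfl, p.subtypeL.integral_comp_comm hInt,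
      Submodule.subtypeL_apply]
  rw [key]
  exact (∫ s, F' s).2

lemma mvt_pack {G G' : ℝ → ℝ} (hG : ∀ y, HasDerivAt G (G' y) y) (u v : ℝ) :
    ∃ ξ, |ξ - u| ≤ |v - u| ∧ G v - G u = (v - u) * G' ξ := by
  rcases eq_or_ne v u with rfl | hne
  · exact ⟨v, by simp⟩
  rcases hne.lt_or_gt with h | h
  · obtain ⟨c, hc, hc2⟩ := exists_hasDerivAt_eq_slope G G' h
      (fun y _ => (hG y).continuousAt.continuousWithinAt) (fun y _ => hG y)
    obtain ⟨hc1, hc2'⟩ := hc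
    refine ⟨c, ?_, ?_⟩
    · rw [abs_of_neg (by linarith), abs_of_neg (by linarith)]; linarith
    · rw [hc2]; have huv : u - v ≠ 0 := by linarith
      field_simp; ring
  · obtain ⟨c, hc, hc2⟩ := exists_hasDerivAt_eq_slope G G' h
      (fun y _ => (hG y).continuousAt.continuousWithinAt) (fun y _ => hG y)
    obtain ⟨hc1, hc2'⟩ := hc
    refine ⟨c, ?_, ?_⟩
    · rw [abs_of_pos (by linarith), abs_of_pos (by linarith)]; linarith
    · rw [hc2]; have huv : v - u ≠ 0 := by linarith
      field_simp


/-- A smooth function whose k-th iterated derivative vanishes identically is given by a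
polynomial with k coefficients. -/
lemma poly_of_iteratedDeriv_zero : ∀ (k : ℕ) (f : ℝ → ℝ), ContDiff ℝ (⊤ : ℕ∞) f →
    (∀ x, iteratedDeriv k f x = 0) → ∃ c : Fin k → ℝ, ∀ x, f x = ∑ i, c i * x ^ (i : ℕ) := by
  intro k
  induction k with
  | zero =>
    intro f _ h
    exact ⟨fun _ => 0, fun x => by simpa [iteratedDeriv_zero] using h x⟩
  | succ k ih =>
    intro f hf h
    have hdf : ContDiff ℝ (⊤ : ℕ∞) (deriv f) :=
      (contDiff_infty_iff_deriv.mp hf).2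
    have hd : ∀ x, iteratedDeriv k (deriv f) x = 0 := by
      intro x
      have := h x
      rwa [iteratedDeriv_succ'] at this
    obtain ⟨c, hc⟩ := ih (deriv f) hdf hd
    set P : ℝ → ℝ := fun x => ∑ i : Fin k, c i / ((i : ℕ) + 1) * x ^ ((i : ℕ) + 1) with hP
    have hPd : ∀ x, HasDerivAt P (∑ i : Fin k, c i * x ^ (i : ℕ)) x := by
      intro x
      have : ∀ i : Fin k, HasDerivAt (fun x : ℝ => c i / ((i : ℕ) + 1) * x ^ ((i : ℕ) + 1))
          (c i * x ^ (i : ℕ)) x := by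
        intro i
        have h1 : HasDerivAt (fun x : ℝ => x ^ ((i : ℕ) + 1))
            ((((i : ℕ) + 1 : ℕ) : ℝ) * x ^ (i : ℕ)) x := by
          simpa using hasDerivAt_pow ((i : ℕ) + 1) x
        have h2 := h1.const_mul (c i / ((i : ℕ) + 1))
        refine h2.congr_deriv ?_
        have : (((i : ℕ) : ℝ) + 1) ≠ 0 := by positivity
        push_cast
        field_simp
      simpa using HasDerivAt.fun_sum (fun i _ => this i)
    have hgd : ∀ x, HasDerivAt (fun x => f x - P x) 0 x := by
      intro x
      have h1 : HasDerivAt f (deriv f x) x :=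
        (hf.differentiable (by simp) x).hasDerivAt
      have := h1.sub (hPd x)
      rwa [hc x, sub_self] at this
    have hconst : ∀ x, f x - P x = f 0 - P 0 := by
      intro x
      exact is_const_of_deriv_eq_zero (fun y => (hgd y).differentiableAt)
        (fun y => (hgd y).deriv) x 0
    refine ⟨Fin.cases (f 0 - P 0) (fun i => c i / ((i : ℕ) + 1)), fun x => ?_⟩
    rw [Fin.sum_univ_succ]
    simp only [Fin.cases_zero, Fin.cases_succ, Fin.val_zero, pow_zero, mul_one, Fin.val_succ]
    have := hconst x
    simp only [hP] at this ⊢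
    linarith [this]

/-- Pointwise limits of polynomials with uniformly bounded number of coefficients are
polynomial. -/
lemma poly_of_pointwise_limit {k : ℕ} {σ : ℝ → ℝ} {f : ℕ → ℝ → ℝ}
    (hrep : ∀ n, ∃ c : Fin k → ℝ, ∀ x, f n x = ∑ i, c i * x ^ (i : ℕ))
    (hlim : ∀ x, Tendsto (fun n => f n x) atTop (nhds (σ x))) :
    ∃ p : Polynomial ℝ, ∀ x, σ x = p.eval x := by
  classical
  set v : Fin k → ℝ := fun i => (i : ℕ) with hv
  have hinj : Set.InjOn v (Finset.univ : Finset (Fin k)) := by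
    intro i _ j _ hij
    simp only [hv] at hij
    ext
    exact_mod_cast hij
  -- each f n is the evaluation of a polynomial of degree < k
  have key : ∀ n x, f n x = ∑ i : Fin k, f n (v i) * (Lagrange.basis Finset.univ v i).eval x := by
    intro n x
    obtain ⟨c, hc⟩ := hrep n
    set p : Polynomial ℝ := ∑ i : Fin k, C (c i) * X ^ (i : ℕ) with hp
    have hpeval : ∀ y, p.eval y = f n y := by
      intro y; rw [hc y, hp]; simp [eval_finset_sum]
    have hdeg : p.degree < (Finset.univ : Finset (Fin k)).card := by
      rw [Finset.card_univ, Fintype.card_fin]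
      apply lt_of_le_of_lt (Polynomial.degree_sum_le _ _)
      rw [Finset.sup_lt_iff (by exact_mod_cast WithBot.bot_lt_coe k)]
      intro i _
      apply lt_of_le_of_lt (Polynomial.degree_C_mul_X_pow_le _ _)
      exact_mod_cast i.2
    have := Lagrange.eq_interpolate hinj hdeg
    calc f n x = p.eval x := (hpeval x).symm
      _ = (Lagrange.interpolate Finset.univ v fun i => p.eval (v i)).eval x := by rw [← this]
      _ = ∑ i : Fin k, f n (v i) * (Lagrange.basis Finset.univ v i).eval x := by
          rw [Lagrange.interpolate_apply]
          simp [eval_finset_sum, hpeval]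
  set q : Polynomial ℝ := Lagrange.interpolate Finset.univ v fun i => σ (v i) with hq
  refine ⟨q, fun x => ?_⟩
  have h1 : Tendsto (fun n => f n x) atTop (nhds (q.eval x)) := by
    have : Tendsto (fun n => ∑ i : Fin k, f n (v i) * (Lagrange.basis Finset.univ v i).eval x)
        atTop (nhds (∑ i : Fin k, σ (v i) * (Lagrange.basis Finset.univ v i).eval x)) := by
      apply tendsto_finset_sum
      intro i _
      exact (hlim (v i)).mul_const _
    have h2 : q.eval x = ∑ i : Fin k, σ (v i) * (Lagrange.basis Finset.univ v i).eval x := by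
      rw [hq, Lagrange.interpolate_apply]; simp [eval_finset_sum]
    rw [h2]
    exact this.congr (fun n => (key n x).symm)
  exact tendsto_nhds_unique (hlim x) h1

/-- The continuous map `x ↦ x^k * G (α x + β)` on `Icc a b`. -/
noncomputable def cmk {a b : ℝ} (G : ℝ → ℝ) (hG : Continuous G) (k : ℕ) (α β : ℝ) :
    C(Set.Icc a b, ℝ) :=
  ⟨fun x => (x : ℝ) ^ k * G (α * x + β),
    (continuous_subtype_val.pow k).mul
      (hG.comp ((continuous_const.mul continuous_subtype_val).add continuous_const))⟩

lemma cmk_apply {a b : ℝ} (G : ℝ → ℝ) (hG : Continuous G) (k : ℕ) (α β : ℝ)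
    (x : Set.Icc a b) : cmk G hG k α β x = (x : ℝ) ^ k * G (α * x + β) := rfl

/-- The monomial `x ↦ x^k` as a continuous map on `Icc a b`. -/
noncomputable def monoIcc (a b : ℝ) (k : ℕ) : C(Set.Icc a b, ℝ) :=
  ⟨fun x => (x : ℝ) ^ k, continuous_subtype_val.pow k⟩

lemma cmk_cont_beta {a b : ℝ} (G : ℝ → ℝ) (hG : Continuous G) (k : ℕ) (α : ℝ) :
    Continuous fun β => (cmk G hG k α β : C(Set.Icc a b, ℝ)) := by
  apply ContinuousMap.continuous_of_continuous_uncurry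
  exact ((continuous_subtype_val.comp continuous_snd).pow k).mul
    (hG.comp (((continuous_const.mul (continuous_subtype_val.comp continuous_snd))).add
      continuous_fst))


set_option maxHeartbeats 1000000 in
lemma quot_tendsto {a b : ℝ} {N N' : ℝ → ℝ} (hNc : Continuous N) (hN'c : Continuous N')
    (hNd : ∀ y, HasDerivAt N (N' y) y) (k : ℕ) (α β : ℝ) :
    Tendsto (fun h : ℝ => h⁻¹ • (cmk (a := a) (b := b) N hNc k (α + h) β - cmk N hNc k α β))
      (𝓝[≠] (0 : ℝ)) (𝓝 (cmk N' hN'c (k + 1) α β)) := by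
  rw [Metric.tendsto_nhdsWithin_nhds]
  intro ε hε
  set C := max |a| |b| + 1 with hC
  have hC1 : (1 : ℝ) ≤ C := by
    have := abs_nonneg a
    have := le_max_left |a| |b|
    simp only [hC]; linarith
  have hC0 : (0 : ℝ) < C := by linarith
  have hxC : ∀ x : Set.Icc a b, |(x : ℝ)| ≤ C := by
    intro x
    have := abs_le_max_abs_abs x.2.1 x.2.2
    simp only [hC]; linarith
  set R := |α| * C + |β| + C with hR
  have hucN' := (isCompact_Icc (a := -R) (b := R)).uniformContinuousOn_of_continuous
    hN'c.continuousOn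
  rw [Metric.uniformContinuousOn_iff] at hucN'
  set ε' := ε / (C ^ (k + 1) + 1) with hε'
  have hε'0 : 0 < ε' := by positivity
  obtain ⟨δ', hδ'0, hδ'⟩ := hucN' ε' hε'0
  refine ⟨min 1 (δ' / (C + 1)), by positivity, ?_⟩
  intro h hh hdist
  have hh0 : h ≠ 0 := hh
  rw [Real.dist_eq, sub_zero] at hdist
  have hhle1 : |h| < 1 := lt_of_lt_of_le hdist (min_le_left _ _)
  have hhle2 : |h| < δ' / (C + 1) := lt_of_lt_of_le hdist (min_le_right _ _)
  rw [dist_eq_norm]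
  have hbound : ∀ x : Set.Icc a b,
      ‖((h⁻¹ • (cmk (a := a) (b := b) N hNc k (α + h) β - cmk N hNc k α β)
        - cmk N' hN'c (k + 1) α β : C(Set.Icc a b, ℝ))) x‖ ≤ C ^ (k + 1) * ε' := by
    intro x
    set u : ℝ := α * x + β with hu
    obtain ⟨ξ, hξ1, hξ2⟩ := mvt_pack hNd u (u + h * x)
    rw [add_sub_cancel_left] at hξ1 hξ2
    have hxu : (α + h) * (x : ℝ) + β = u + h * x := by rw [hu]; ring
    have happ : ((h⁻¹ • (cmk (a := a) (b := b) N hNc k (α + h) β - cmk N hNc k α β)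
        - cmk N' hN'c (k + 1) α β : C(Set.Icc a b, ℝ))) x
        = (x : ℝ) ^ (k + 1) * (N' ξ - N' u) := by
      simp only [ContinuousMap.sub_apply, ContinuousMap.smul_apply, cmk_apply,
        smul_eq_mul]
      rw [hxu, ← hu]
      have hinv : h⁻¹ * h = 1 := inv_mul_cancel₀ hh0
      linear_combination (h⁻¹ * (x : ℝ) ^ k) * hξ2 + ((x : ℝ) ^ (k + 1) * N' ξ) * hinv
    rw [happ]
    -- membership of u and ξ in Icc (-R) R
    have hux : |u| ≤ |α| * C + |β| := by
      rw [hu]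
      calc |α * ↑x + β| ≤ |α * ↑x| + |β| := abs_add_le _ _
        _ ≤ |α| * C + |β| := by
            rw [abs_mul]
            have := hxC x
            have := abs_nonneg α
            nlinarith
    have hhx : |h * x| ≤ |h| * C := by
      rw [abs_mul]
      have := hxC x
      have := abs_nonneg h
      nlinarith
    have humem : u ∈ Set.Icc (-R) R := by
      rw [Set.mem_Icc, hR]
      have h1 := neg_abs_le u
      have h2 := le_abs_self u
      constructor <;> linarith
    have hξu : |ξ - u| ≤ |h| * C := le_trans hξ1 hhx
    have hξmem : ξ ∈ Set.Icc (-R) R := by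
      have h1 : |ξ| ≤ |u| + |h| * C := by
        have := abs_sub_abs_le_abs_sub ξ u
        linarith
      have h2 : |ξ| ≤ |α| * C + |β| + C := by
        have : |h| * C ≤ 1 * C := by nlinarith [hhle1.le, hC0.le]
        linarith
      rw [Set.mem_Icc, hR]
      constructor
      · linarith [neg_abs_le ξ]
      · linarith [le_abs_self ξ]
    have hdistξu : dist ξ u < δ' := by
      rw [Real.dist_eq]
      have : |h| * C < δ' / (C + 1) * C := by nlinarith
      have h3 : δ' / (C + 1) * C < δ' := by
        rw [div_mul_eq_mul_div, div_lt_iff₀ (by linarith)]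
        nlinarith
      exact lt_of_le_of_lt hξu (lt_trans this h3)
    have hN'close : |N' ξ - N' u| < ε' := by
      have := hδ' ξ hξmem u humem hdistξu
      rwa [Real.dist_eq] at this
    rw [Real.norm_eq_abs, abs_mul, abs_pow]
    have h5 : |(x : ℝ)| ^ (k + 1) ≤ C ^ (k + 1) :=
      pow_le_pow_left₀ (abs_nonneg _) (hxC x) _
    exact mul_le_mul h5 hN'close.le (abs_nonneg _) (by positivity)
  refine lt_of_le_of_lt ((ContinuousMap.norm_le _ (by positivity)).mpr hbound) ?_
  rw [hε', mul_div_assoc', div_lt_iff₀ (by positivity)]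
  nlinarith [hε, pow_pos hC0 (k + 1)]

set_option maxHeartbeats 2000000 in
theorem span_dense_Icc (σ : ℝ → ℝ) (hσc : Continuous σ)
    (hnp : ¬ ∃ p : Polynomial ℝ, ∀ x : ℝ, σ x = p.eval x) (a b : ℝ) :
    Dense ((Submodule.span ℝ
      {F : C(Set.Icc a b, ℝ) | ∃ α β : ℝ, ∀ x, F x = σ (α * x + β)} :
        Submodule ℝ C(Set.Icc a b, ℝ)) : Set C(Set.Icc a b, ℝ)) := by
  rw [Submodule.dense_iff_topologicalClosure_eq_top]
  set V := (Submodule.span ℝ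
    {F : C(Set.Icc a b, ℝ) | ∃ α β : ℝ, ∀ x, F x = σ (α * x + β)}).topologicalClosure with hV
  have hVc : IsClosed (V : Set C(Set.Icc a b, ℝ)) := Submodule.isClosed_topologicalClosure _
  set L : ℝ →L[ℝ] ℝ →L[ℝ] ℝ := ContinuousLinearMap.lsmul ℝ ℝ with hL
  -- Step A : the generators are in V
  have hA : ∀ α β : ℝ, cmk σ hσc 0 α β ∈ V := by
    intro α β
    apply Submodule.le_topologicalClosure
    apply Submodule.subset_span
    exact ⟨α, β, fun x => by simp [cmk_apply]⟩
  -- smoothness of the mollifications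
  have hgs : ∀ φ : ContDiffBump (0 : ℝ),
      ContDiff ℝ (⊤ : ℕ∞) (φ.normed volume ⋆[L, volume] σ) := fun φ =>
    φ.hasCompactSupport_normed.contDiff_convolution_left _ φ.contDiff_normed
      hσc.locallyIntegrable
  have hgk : ∀ (φ : ContDiffBump (0 : ℝ)) (k : ℕ),
      ContDiff ℝ (⊤ : ℕ∞) (iteratedDeriv k (φ.normed volume ⋆[L, volume] σ)) := by
    intro φ k
    rw [iteratedDeriv_eq_iterate]
    exact (hgs φ).iterate_deriv k
  -- Step C : mollified generators are in V
  have hGb : ∀ (φ : ContDiffBump (0 : ℝ)) (α β : ℝ),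
      cmk (φ.normed volume ⋆[L, volume] σ) (hgs φ).continuous 0 α β ∈ V := by
    intro φ α β
    set Φ : ℝ → C(Set.Icc a b, ℝ) := fun s => φ.normed volume s • cmk σ hσc 0 α (β - s)
      with hΦ
    have hΦc : Continuous Φ :=
      (φ.continuous_normed).smul ((cmk_cont_beta σ hσc 0 α).comp
        (continuous_const.sub continuous_id))
    have hΦsupp : HasCompactSupport Φ := by
      apply (φ.hasCompactSupport_normed (μ := volume)).mono
      intro s hs
      simp only [Function.mem_support] at hs ⊢
      intro h0
      exact hs (by simp [hΦ, h0])
    have hmem : ∀ s, Φ s ∈ V := fun s => V.smul_mem _ (hA α (β - s))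
    have hInt : Integrable Φ := hΦc.integrable_of_hasCompactSupport hΦsupp
    have key : cmk (φ.normed volume ⋆[L, volume] σ) (hgs φ).continuous 0 α β = ∫ s, Φ s := by
      ext x
      have hev := (ContinuousMap.evalCLM ℝ x).integral_comp_comm hInt
      have h2 : ((∫ s, Φ s) : C(Set.Icc a b, ℝ)) x = ∫ s, (Φ s) x := hev.symm
      rw [cmk_apply, h2, pow_zero, one_mul, convolution_def]
      congr 1
      funext s
      simp only [hΦ, ContinuousMap.smul_apply, cmk_apply, pow_zero, one_mul, hL,
        ContinuousLinearMap.lsmul_apply, smul_eq_mul]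
      ring_nf
    rw [key]
    exact integral_mem_closedSubmodule V hVc hΦc hΦsupp hmem
  -- Step E : derivatives in α
  have hDk : ∀ (φ : ContDiffBump (0 : ℝ)) (k : ℕ) (α β : ℝ),
      cmk (iteratedDeriv k (φ.normed volume ⋆[L, volume] σ)) (hgk φ k).continuous k α β ∈ V := by
    intro φ k
    induction k with
    | zero =>
      intro α β
      have heq : cmk (a := a) (b := b) (iteratedDeriv 0 (φ.normed volume ⋆[L, volume] σ)) (hgk φ 0).continuous
          0 α β = cmk (φ.normed volume ⋆[L, volume] σ) (hgs φ).continuous 0 α β := by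
        ext x
        simp [cmk_apply, iteratedDeriv_zero]
      rw [heq]; exact hGb φ α β
    | succ k ih =>
      intro α β
      set N := iteratedDeriv k (φ.normed volume ⋆[L, volume] σ) with hN
      set N' := iteratedDeriv (k + 1) (φ.normed volume ⋆[L, volume] σ) with hN'
      have hNc : Continuous N := (hgk φ k).continuous
      have hN'c : Continuous N' := (hgk φ (k + 1)).continuous
      have hNd : ∀ y, HasDerivAt N (N' y) y := by
        intro y
        have h1 : DifferentiableAt ℝ N y :=
          ((hgk φ k).differentiable (by simp)) y
        have h2 := h1.hasDerivAt
        rwa [show deriv N y = N' y by rw [hN', iteratedDeriv_succ]] at h2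
      have htend := quot_tendsto (a := a) (b := b) hNc hN'c hNd k α β
      have heach : ∀ᶠ h : ℝ in 𝓝[≠] (0 : ℝ),
          h⁻¹ • (cmk (a := a) (b := b) N hNc k (α + h) β - cmk N hNc k α β) ∈ V := by
        filter_upwards with h
        exact V.smul_mem _ (V.sub_mem (ih (α + h) β) (ih α β))
      exact hVc.mem_of_tendsto htend heach
  -- Step F/G : monomials are in V
  have hmono : ∀ k : ℕ, monoIcc a b k ∈ V := by
    intro k
    by_cases hex : ∃ (φ : ContDiffBump (0 : ℝ)) (β : ℝ),
        iteratedDeriv k (φ.normed volume ⋆[L, volume] σ) β ≠ 0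
    · obtain ⟨φ, β, hne⟩ := hex
      have hmem := hDk φ k 0 β
      have heq : cmk (a := a) (b := b) (iteratedDeriv k (φ.normed volume ⋆[L, volume] σ)) (hgk φ k).continuous
          k 0 β = (iteratedDeriv k (φ.normed volume ⋆[L, volume] σ) β) • monoIcc a b k := by
        ext x
        simp [cmk_apply, monoIcc, zero_mul, zero_add]
        ring
      rw [heq] at hmem
      have h2 := V.smul_mem (iteratedDeriv k (φ.normed volume ⋆[L, volume] σ) β)⁻¹ hmem
      rwa [smul_smul, inv_mul_cancel₀ hne, one_smul] at h2
    · exfalso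
      apply hnp
      push_neg at hex
      set φs : ℕ → ContDiffBump (0 : ℝ) := fun n =>
        ⟨((n : ℝ) + 1)⁻¹ / 2, ((n : ℝ) + 1)⁻¹, by positivity, by
          have : (0:ℝ) < ((n : ℝ) + 1)⁻¹ := by positivity
          linarith⟩ with hφs
      have hrep : ∀ n, ∃ c : Fin k → ℝ,
          ∀ x, ((φs n).normed volume ⋆[L, volume] σ) x = ∑ i, c i * x ^ (i : ℕ) := fun n =>
        poly_of_iteratedDeriv_zero k _ (hgs (φs n)) (fun x => hex (φs n) x)
      have hlim : ∀ x, Tendsto (fun n => ((φs n).normed volume ⋆[L, volume] σ) x)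
          atTop (𝓝 (σ x)) := by
        intro x
        apply ContDiffBump.convolution_tendsto_right_of_continuous _ hσc x
        simp only [hφs]
        have := tendsto_one_div_add_atTop_nhds_zero_nat (𝕜 := ℝ)
        simpa [one_div] using this
      exact poly_of_pointwise_limit hrep hlim
  -- Step H : conclude by Weierstrass
  rw [eq_top_iff]
  intro f _
  have hpoly : (polynomialFunctions (Set.Icc a b) : Set C(Set.Icc a b, ℝ)) ⊆ V := by
    intro F hF
    rw [polynomialFunctions_coe] at hF
    obtain ⟨p, rfl⟩ := hF
    have heq : (Polynomial.toContinuousMapOnAlgHom (Set.Icc a b) p : C(Set.Icc a b, ℝ))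
        = ∑ i ∈ Finset.range (p.natDegree + 1), p.coeff i • monoIcc a b i := by
      ext x
      simp only [Polynomial.toContinuousMapOnAlgHom_apply, Polynomial.toContinuousMapOn,
        Polynomial.toContinuousMap, ContinuousMap.coe_mk, ContinuousMap.coe_sum,
        Finset.sum_apply, ContinuousMap.smul_apply, monoIcc, smul_eq_mul]
      exact Polynomial.eval_eq_sum_range (x : ℝ)
    rw [heq]
    exact Submodule.sum_mem _ fun i _ => V.smul_mem _ (hmono i)
  have hfc : f ∈ closure (polynomialFunctions (Set.Icc a b) : Set C(Set.Icc a b, ℝ)) := by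
    have := polynomialFunctions_closure_eq_top a b
    have h2 : f ∈ ((polynomialFunctions (Set.Icc a b)).topologicalClosure :
        Set C(Set.Icc a b, ℝ)) := by rw [this]; trivial
    rwa [Subalgebra.topologicalClosure_coe] at h2
  have := closure_mono hpoly hfc
  rwa [hVc.closure_eq] at this

end Helpers

/-- For σ ∈ C(ℝ), σ ≠ 0, the span of x ↦ σ(αx + β), α, β ∈ ℝ, is dense in C(ℝ)
(compact-open topology) iff σ is not a polynomial. -/
theorem translates_dilates_dense_iff (σ : ℝ → ℝ) (hσc : Continuous σ) (hσ : σ ≠ 0) :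
    Dense (Submodule.span ℝ
        {F : C(ℝ, ℝ) | ∃ α β : ℝ, ∀ x : ℝ, F x = σ (α * x + β)} : Set C(ℝ, ℝ)) ↔
      ¬ ∃ p : Polynomial ℝ, ∀ x : ℝ, σ x = p.eval x := by
  constructor
  · -- dense → σ is not a polynomial
    rintro hd ⟨p, hp⟩
    set n := p.natDegree with hn
    set mfun : Fin (n + 1) → C(ℝ, ℝ) := fun i =>
      ⟨fun x => x ^ (i : ℕ), by continuity⟩ with hmfun
    set W := Submodule.span ℝ (Set.range mfun) with hW
    have hfin : FiniteDimensional ℝ W := FiniteDimensional.span_of_finite ℝ (Set.finite_range _)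
    have hWc : IsClosed (W : Set C(ℝ, ℝ)) := Submodule.closed_of_finiteDimensional W
    have hsub : Submodule.span ℝ {F : C(ℝ, ℝ) | ∃ α β : ℝ, ∀ x : ℝ, F x = σ (α * x + β)} ≤ W := by
      rw [Submodule.span_le]
      rintro F ⟨α, β, hF⟩
      set q := p.comp (Polynomial.C β + Polynomial.C α * Polynomial.X) with hq
      have hqd : q.natDegree ≤ n := by
        refine le_trans (Polynomial.natDegree_comp_le) ?_
        have h1 : (Polynomial.C β + Polynomial.C α * Polynomial.X).natDegree ≤ 1 := by
          refine le_trans (Polynomial.natDegree_add_le _ _) ?_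
          simp only [Polynomial.natDegree_C, max_le_iff]
          exact ⟨Nat.zero_le _, le_trans (Polynomial.natDegree_C_mul_le _ _)
            Polynomial.natDegree_X_le⟩
        calc p.natDegree * (Polynomial.C β + Polynomial.C α * Polynomial.X).natDegree
            ≤ n * 1 := Nat.mul_le_mul (le_of_eq hn.symm) h1
          _ = n := by ring
      have hFq : ∀ x : ℝ, F x = q.eval x := by
        intro x
        rw [hF x, hp (α * x + β), hq, Polynomial.eval_comp]
        congr 1
        simp
        ring
      have hFsum : F = ∑ i : Fin (n + 1), q.coeff i • mfun i := by
        ext x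
        simp only [ContinuousMap.coe_sum, Finset.sum_apply, ContinuousMap.smul_apply,
          hmfun, ContinuousMap.coe_mk, smul_eq_mul]
        rw [hFq x, Polynomial.eval_eq_sum_range' (lt_of_le_of_lt hqd (Nat.lt_succ_self n))]
        rw [← Fin.sum_univ_eq_sum_range (fun i => q.coeff i * x ^ i)]
      rw [hFsum]
      exact Submodule.sum_mem _ fun i _ => W.smul_mem _ (Submodule.subset_span ⟨i, rfl⟩)
    have hWtop : W = ⊤ := by
      rw [eq_top_iff]
      intro f _
      have h1 := hd f
      have h2 := closure_mono hsub h1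
      rwa [hWc.closure_eq] at h2
    have hx : (⟨fun x => x ^ (n + 1), by continuity⟩ : C(ℝ, ℝ)) ∈ W := by
      rw [hWtop]; trivial
    rw [hW] at hx
    obtain ⟨c, hc⟩ := (Submodule.mem_span_range_iff_exists_fun ℝ).mp hx
    have hpoint : ∀ x : ℝ, ∑ i : Fin (n + 1), c i * x ^ (i : ℕ) = x ^ (n + 1) := by
      intro x
      have := congrArg (fun F : C(ℝ, ℝ) => F x) hc
      simpa [hmfun, ContinuousMap.coe_sum, Finset.sum_apply] using this
    set P : Polynomial ℝ := ∑ i : Fin (n + 1), Polynomial.C (c i) * Polynomial.X ^ (i : ℕ)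
      with hP
    have hPX : P = Polynomial.X ^ (n + 1) := by
      apply Polynomial.funext
      intro x
      rw [hP]
      simp only [Polynomial.eval_finset_sum, Polynomial.eval_mul, Polynomial.eval_C,
        Polynomial.eval_pow, Polynomial.eval_X]
      rw [hpoint x]
    have h1 : P.coeff (n + 1) = 0 := by
      rw [hP, Polynomial.finset_sum_coeff]
      apply Finset.sum_eq_zero
      intro i _
      rw [Polynomial.coeff_C_mul, Polynomial.coeff_X_pow]
      have hine : (i : ℕ) ≠ n + 1 := Nat.ne_of_lt i.is_lt
      simp only [ite_eq_right_iff, mul_eq_zero]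
      exact Or.inr fun hcontra => absurd hcontra.symm hine
    rw [hPX, Polynomial.coeff_X_pow] at h1
    simp at h1
  · -- σ not polynomial → dense
    intro hnp
    intro f
    rw [mem_closure_iff_nhds_basis
      (nhds_basis_uniformity' (Metric.uniformity_basis_dist.compactConvergenceUniformity))]
    rintro ⟨K, ε⟩ ⟨hK, hε⟩
    obtain ⟨r, hr⟩ := hK.isBounded.subset_closedBall 0
    have hKI : K ⊆ Set.Icc (-r) r := by
      intro x hx
      have := hr hx
      rw [Real.closedBall_eq_Icc] at this
      simpa using this
    set ι : C(Set.Icc (-r) r, ℝ) := ⟨Subtype.val, continuous_subtype_val⟩ with hι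
    set ρ := ContinuousMap.compRightAlgHom ℝ ℝ ι with hρ
    set T := {F : C(Set.Icc (-r) r, ℝ) | ∃ α β : ℝ, ∀ x, F x = σ (α * x + β)} with hT
    set S := {F : C(ℝ, ℝ) | ∃ α β : ℝ, ∀ x : ℝ, F x = σ (α * x + β)} with hS
    have hTS : T = ⇑ρ '' S := by
      ext F
      constructor
      · rintro ⟨α, β, hF⟩
        refine ⟨⟨fun t => σ (α * t + β), hσc.comp (by continuity)⟩, ⟨α, β, fun x => rfl⟩, ?_⟩
        ext x
        exact (hF x).symm
      · rintro ⟨g, ⟨α, β, hg⟩, rfl⟩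
        exact ⟨α, β, fun x => hg x⟩
    have hdI := span_dense_Icc σ hσc hnp (-r) r
    have hfc := hdI (ρ f)
    rw [Metric.mem_closure_iff] at hfc
    obtain ⟨G, hG, hdist⟩ := hfc ε hε
    have hGmap : G ∈ Submodule.map ρ.toLinearMap (Submodule.span ℝ S) := by
      rw [← Submodule.span_image]
      have himg : ⇑ρ.toLinearMap '' S = ⇑ρ '' S := rfl
      rw [himg, ← hTS]
      exact hG
    obtain ⟨g, hgmem, hgr⟩ := Submodule.mem_map.mp hGmap
    refine ⟨g, hgmem, ?_⟩
    intro x hx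
    have hxI : x ∈ Set.Icc (-r) r := hKI hx
    have key : dist (f x) (g x) < ε := by
      have h1 : dist ((ρ f) ⟨x, hxI⟩) (G ⟨x, hxI⟩) ≤ dist (ρ f) G :=
        ContinuousMap.dist_apply_le_dist _
      have h2 : (ρ f) ⟨x, hxI⟩ = f x := rfl
      have h3 : G ⟨x, hxI⟩ = g x := by
        rw [← hgr]; rfl
      rw [h2, h3] at h1
      exact lt_of_le_of_lt h1 hdist
    exact key
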